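/- Let G be a complete multi-partite graph and H a complete graph. Then there exists a totally symmetric edge-coloring c of G with no rainbow copy of H using exactly ar(G, H) colors. -/

import Mathlib

open Classical

noncomputable section

/-- A rainbow `k`-clique in the edge-colored graph `G^c`. -/
def HasRainbowClique {V : Type*} (G : SimpleGraph V) (c : Sym2 V → ℕ) (k : ℕ) : Prop :=
  ∃ S : Finset V, S.card = k ∧ (∀ x ∈ S, ∀ y ∈ S, x ≠ y → G.Adj x y) ∧
    ∀ x ∈ S, ∀ y ∈ S, ∀ z ∈ S, ∀ w ∈ S,
      x ≠ y → z ≠ w → c s(x, y) = c s(z, w) → s(x, y) = s(z, w)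

/-- The number of colors used on the edges of `G`. -/
noncomputable def ncolors {V : Type*} (G : SimpleGraph V) (c : Sym2 V → ℕ) : ℕ :=
  (c '' G.edgeSet).ncard

/-- The anti-Ramsey number `ar(G, K_k)`: the maximum number of colors of an
edge-coloring of `G` without a rainbow `K_k`. -/
noncomputable def antiRamsey {V : Type*} (G : SimpleGraph V) (k : ℕ) : ℕ :=
  sSup {m | ∃ c : Sym2 V → ℕ, ¬ HasRainbowClique G c k ∧ ncolors G c = m}

/-- A color `a` is saturated by the vertex `x`: some edge has color `a` and every
edge of color `a` is incident to `x`. -/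
def Saturates {V : Type*} (G : SimpleGraph V) (c : Sym2 V → ℕ) (x : V) (a : ℕ) : Prop :=
  (∃ e ∈ G.edgeSet, c e = a) ∧ ∀ e ∈ G.edgeSet, c e = a → x ∈ e

/-- The set of colors saturated by `x`. -/
def satColors {V : Type*} (G : SimpleGraph V) (c : Sym2 V → ℕ) (x : V) : Set ℕ :=
  {a | Saturates G c x a}

/-- The saturated color degree `d^s(x)`. -/
noncomputable def satDegree {V : Type*} (G : SimpleGraph V) (c : Sym2 V → ℕ) (x : V) : ℕ :=
  (satColors G c x).ncard

/-- The complete multipartite graph `K_{n 0, …, n (r-1)}` with partite sets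
`U_i = {i} × Fin (n i)`. -/
def KMP (r : ℕ) (n : ℕ → ℕ) : SimpleGraph (Σ i : Fin r, Fin (n i)) :=
  SimpleGraph.completeMultipartiteGraph (fun i : Fin r => Fin (n i))

/-- Two vertices `x, y` are symmetric in the edge-colored graph `G^c`. -/
def SymmetricVerts {V : Type*} (G : SimpleGraph V) (c : Sym2 V → ℕ) (x y : V) : Prop :=
  G.neighborSet x = G.neighborSet y ∧
  ∃ σ : ℕ → ℕ, Set.BijOn σ (satColors G c x) (satColors G c y) ∧
    ∀ z ∈ G.neighborSet x,
      (c s(x, z) ∉ satColors G c x → c s(y, z) = c s(x, z)) ∧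
      (c s(x, z) ∈ satColors G c x → c s(y, z) = σ (c s(x, z)))

namespace TSWork

variable {r : ℕ} {n : ℕ → ℕ}

abbrev V (r : ℕ) (n : ℕ → ℕ) := (Σ i : Fin r, Fin (n i))

lemma kadj {x y : V r n} : (KMP r n).Adj x y ↔ x.1 ≠ y.1 := Iff.rfl

lemma mem_nbr {x z : V r n} : z ∈ (KMP r n).neighborSet x ↔ x.1 ≠ z.1 := Iff.rfl

lemma nbr_ne {x z : V r n} (h : z ∈ (KMP r n).neighborSet x) : z ≠ x :=
  fun hz => (mem_nbr.1 h) (by rw [hz])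

lemma nbr_eq {x y : V r n} (h : x.1 = y.1) :
    (KMP r n).neighborSet x = (KMP r n).neighborSet y := by
  ext z; simp only [mem_nbr, h]

lemma nbr_part {x z : V r n} (h : z ∈ (KMP r n).neighborSet x) : z.1 ≠ x.1 :=
  fun hz => (mem_nbr.1 h) hz.symm

lemma edge_mem {x z : V r n} : s(x, z) ∈ (KMP r n).edgeSet ↔ x.1 ≠ z.1 :=
  (KMP r n).mem_edgeSet

lemma edge_of_nbr {x z : V r n} (h : z ∈ (KMP r n).neighborSet x) :
    s(x, z) ∈ (KMP r n).edgeSet := edge_mem.2 (mem_nbr.1 h)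

lemma edge_split {x : V r n} {e : Sym2 (V r n)} (hx : x ∈ e) : ∃ z, e = s(x, z) :=
  ⟨Sym2.Mem.other hx, (Sym2.other_spec hx).symm⟩

lemma edge_split' {x : V r n} {e : Sym2 (V r n)} (hx : x ∈ e)
    (he : e ∈ (KMP r n).edgeSet) : ∃ z ∈ (KMP r n).neighborSet x, e = s(x, z) := by
  obtain ⟨z, rfl⟩ := edge_split hx
  exact ⟨z, mem_nbr.2 (edge_mem.1 he), rfl⟩

/-! ### saturation basics -/

variable {c : Sym2 (V r n) → ℕ}

lemma mem_sat {a : ℕ} {x : V r n} :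
    a ∈ satColors (KMP r n) c x ↔
      (∃ e ∈ (KMP r n).edgeSet, c e = a) ∧
      ∀ e ∈ (KMP r n).edgeSet, c e = a → x ∈ e := Iff.rfl

lemma sat_sub_colors {x : V r n} :
    satColors (KMP r n) c x ⊆ c '' (KMP r n).edgeSet := by
  rintro a ⟨⟨e, he, hce⟩, -⟩; exact ⟨e, he, hce⟩

lemma colors_fin : (c '' (KMP r n).edgeSet).Finite :=
  Set.Finite.image c (Set.toFinite _)

lemma sat_fin {x : V r n} : (satColors (KMP r n) c x).Finite :=
  colors_fin.subset sat_sub_colors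

lemma not_sat_of_edge {x : V r n} {a : ℕ} {e : Sym2 (V r n)}
    (he : e ∈ (KMP r n).edgeSet) (hce : c e = a) (hx : x ∉ e) :
    a ∉ satColors (KMP r n) c x := fun hs => hx (hs.2 e he hce)

/-- The color of an edge `s(x,z)` incident to a *different* vertex `y` (with
`y ≠ x`, `y ≠ z`) is not saturated by `y`. -/
lemma not_sat_of_pair {x z y : V r n} (hz : z ∈ (KMP r n).neighborSet x)
    (hyx : y ≠ x) (hyz : y ≠ z) : c s(x, z) ∉ satColors (KMP r n) c y :=
  not_sat_of_edge (edge_of_nbr hz) rfl (by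
    rw [Sym2.mem_iff]; rintro (h | h) <;> [exact hyx h; exact hyz h])

/-! ### symmetry is an equivalence -/

lemma sym_refl (c : Sym2 (V r n) → ℕ) (x : V r n) : SymmetricVerts (KMP r n) c x x :=
  ⟨rfl, id, Set.bijOn_id _, fun _ _ => ⟨fun _ => rfl, fun _ => rfl⟩⟩

lemma sym_symm {x y : V r n} (hp : x.1 = y.1) (hxy : x ≠ y)
    (h : SymmetricVerts (KMP r n) c x y) : SymmetricVerts (KMP r n) c y x := by
  obtain ⟨hN, σ, hbij, hcond⟩ := h
  refine ⟨hN.symm, Function.invFunOn σ (satColors (KMP r n) c x),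
    Set.BijOn.symm hbij.invOn_invFunOn.symm hbij, ?_⟩
  intro z hz
  have hzx : z ∈ (KMP r n).neighborSet x := hN ▸ hz
  have hzy : z ≠ y := nbr_ne hz
  constructor
  · intro hns
    by_cases hca : c s(x, z) ∈ satColors (KMP r n) c x
    · exact absurd (((hcond z hzx).2 hca) ▸ hbij.mapsTo hca) hns
    · exact ((hcond z hzx).1 hca).symm
  · intro hs
    by_cases hca : c s(x, z) ∈ satColors (KMP r n) c x
    · rw [(hcond z hzx).2 hca, hbij.injOn.leftInvOn_invFunOn hca]
    · exfalso
      have := (hcond z hzx).1 hca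
      exact not_sat_of_pair hzx hxy.symm hzy.symm (this ▸ hs)

lemma sym_trans {x y z : V r n} (hp : x.1 = y.1) (hxy : x ≠ y)
    (h1 : SymmetricVerts (KMP r n) c x y) (h2 : SymmetricVerts (KMP r n) c y z) :
    SymmetricVerts (KMP r n) c x z := by
  obtain ⟨hN1, σ1, hbij1, hcond1⟩ := h1
  obtain ⟨hN2, σ2, hbij2, hcond2⟩ := h2
  refine ⟨hN1.trans hN2, σ2 ∘ σ1, hbij2.comp hbij1, ?_⟩
  intro w hw
  have hwy : w ∈ (KMP r n).neighborSet y := hN1 ▸ hw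
  have hwyne : w ≠ y := nbr_ne hwy
  constructor
  · intro hns
    have e1 := (hcond1 w hw).1 hns
    have : c s(y, w) ∉ satColors (KMP r n) c y := by
      rw [e1]; exact not_sat_of_pair hw hxy.symm hwyne.symm
    have e2 := (hcond2 w hwy).1 this
    rw [e2, e1]
  · intro hs
    have e1 := (hcond1 w hw).2 hs
    have : c s(y, w) ∈ satColors (KMP r n) c y := by rw [e1]; exact hbij1.mapsTo hs
    have e2 := (hcond2 w hwy).2 this
    rw [e2, e1]; rfl

/-! ### the clone construction -/

def freshC (c : Sym2 (V r n) → ℕ) : ℕ := sSup (c '' (KMP r n).edgeSet) + 1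

lemma lt_fresh {e : Sym2 (V r n)} (he : e ∈ (KMP r n).edgeSet) : c e < freshC c :=
  Nat.lt_succ_of_le (le_csSup colors_fin.bddAbove ⟨e, he, rfl⟩)

lemma color_lt_fresh {a : ℕ} (ha : a ∈ c '' (KMP r n).edgeSet) : a < freshC c := by
  obtain ⟨e, he, rfl⟩ := ha; exact lt_fresh he

lemma sat_lt_fresh {x : V r n} {a : ℕ} (ha : a ∈ satColors (KMP r n) c x) :
    a < freshC c := color_lt_fresh (sat_sub_colors ha)

def psiC (c : Sym2 (V r n) → ℕ) (u : V r n) : ℕ → ℕ :=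
  fun b => if b ∈ satColors (KMP r n) c u then freshC c + b else b

def cloneC (c : Sym2 (V r n) → ℕ) (u w : V r n) : Sym2 (V r n) → ℕ :=
  fun e => if h : w ∈ e then psiC c u (c s(u, Sym2.Mem.other h)) else c e

lemma clone_not_mem {u w : V r n} {e : Sym2 (V r n)} (hw : w ∉ e) :
    cloneC c u w e = c e := dif_neg hw

lemma clone_pair {u w : V r n} (z : V r n) :
    cloneC c u w s(w, z) = psiC c u (c s(u, z)) := by
  have h : w ∈ s(w, z) := Sym2.mem_mk_left w z
  have : cloneC c u w s(w, z) = psiC c u (c s(u, Sym2.Mem.other h)) := dif_pos h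
  rwa [Sym2.congr_right.mp (Sym2.other_spec h)] at this

lemma clone_pair' {u w : V r n} (z : V r n) :
    cloneC c u w s(z, w) = psiC c u (c s(u, z)) := by
  rw [Sym2.eq_swap]; exact clone_pair z

lemma psi_of_sat {u : V r n} {b : ℕ} (hb : b ∈ satColors (KMP r n) c u) :
    psiC c u b = freshC c + b := if_pos hb

lemma psi_of_not_sat {u : V r n} {b : ℕ} (hb : b ∉ satColors (KMP r n) c u) :
    psiC c u b = b := if_neg hb

lemma psi_cases {u : V r n} (b : ℕ) :
    psiC c u b = b ∨ (b ∈ satColors (KMP r n) c u ∧ psiC c u b = freshC c + b) := by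
  by_cases hb : b ∈ satColors (KMP r n) c u
  · exact Or.inr ⟨hb, psi_of_sat hb⟩
  · exact Or.inl (psi_of_not_sat hb)

lemma psi_ne_color {u : V r n} {b a : ℕ} (hb : b ∈ satColors (KMP r n) c u)
    (ha : a ∈ c '' (KMP r n).edgeSet) : psiC c u b ≠ a := by
  rw [psi_of_sat hb]
  have := color_lt_fresh ha
  omega

lemma psi_inj {u : V r n} {b1 b2 : ℕ} (h1 : b1 ∈ c '' (KMP r n).edgeSet)
    (h2 : b2 ∈ c '' (KMP r n).edgeSet) (h : psiC c u b1 = psiC c u b2) : b1 = b2 := by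
  by_cases hs1 : b1 ∈ satColors (KMP r n) c u <;>
    by_cases hs2 : b2 ∈ satColors (KMP r n) c u
  · rw [psi_of_sat hs1, psi_of_sat hs2] at h; omega
  · rw [psi_of_sat hs1, psi_of_not_sat hs2] at h
    have := color_lt_fresh h2; omega
  · rw [psi_of_not_sat hs1, psi_of_sat hs2] at h
    have := color_lt_fresh h1; omega
  · rwa [psi_of_not_sat hs1, psi_of_not_sat hs2] at h
/-! ### clone: color count -/

lemma clone_count {u w : V r n} (hp : u.1 = w.1) :
    ncolors (KMP r n) c + satDegree (KMP r n) c u ≤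
      ncolors (KMP r n) (cloneC c u w) + satDegree (KMP r n) c w := by
  classical
  set A : Set ℕ := c '' {e | e ∈ (KMP r n).edgeSet ∧ w ∉ e} with hA
  have hAfin : A.Finite := Set.Finite.image _ (Set.toFinite _)
  have hAcol : A ⊆ c '' (KMP r n).edgeSet := by
    rintro a ⟨e, ⟨he, -⟩, rfl⟩; exact ⟨e, he, rfl⟩
  have h1 : c '' (KMP r n).edgeSet ⊆ A ∪ satColors (KMP r n) c w := by
    rintro a ⟨e, he, rfl⟩
    by_cases hall : ∀ e' ∈ (KMP r n).edgeSet, c e' = c e → w ∈ e'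
    · exact Or.inr ⟨⟨e, he, rfl⟩, hall⟩
    · push_neg at hall
      obtain ⟨e', he', hce', hwe'⟩ := hall
      exact Or.inl ⟨e', ⟨he', hwe'⟩, hce'⟩
  have h2 : A ∪ ((freshC c + ·) '' satColors (KMP r n) c u) ⊆
      cloneC c u w '' (KMP r n).edgeSet := by
    rintro a (⟨e, ⟨he, hwe⟩, rfl⟩ | ⟨b, hb, rfl⟩)
    · exact ⟨e, he, clone_not_mem hwe⟩
    · obtain ⟨e₀, he₀, hce₀⟩ := hb.1
      obtain ⟨z, hz, rfl⟩ := edge_split' (hb.2 e₀ he₀ hce₀) he₀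
      have hzw : z ∈ (KMP r n).neighborSet w := by
        rw [mem_nbr, ← hp]; exact mem_nbr.1 hz
      exact ⟨s(w, z), edge_of_nbr hzw, by rw [clone_pair, hce₀, psi_of_sat hb]⟩
  have hdisj : Disjoint A ((freshC c + ·) '' satColors (KMP r n) c u) := by
    rw [Set.disjoint_left]
    rintro a ha ⟨b, hb, hba⟩
    have h1 := color_lt_fresh (hAcol ha)
    simp only at hba
    omega
  have himg : ((freshC c + ·) '' satColors (KMP r n) c u).ncard =
      satDegree (KMP r n) c u :=
    Set.ncard_image_of_injective _ (fun b1 b2 h => by simpa using h)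
  calc (c '' (KMP r n).edgeSet).ncard + satDegree (KMP r n) c u
      ≤ (A ∪ satColors (KMP r n) c w).ncard + satDegree (KMP r n) c u := by
        exact Nat.add_le_add_right
          (Set.ncard_le_ncard h1 (hAfin.union sat_fin)) _
    _ ≤ (A.ncard + satDegree (KMP r n) c w) + satDegree (KMP r n) c u := by
        exact Nat.add_le_add_right (Set.ncard_union_le _ _) _
    _ = (A.ncard + ((freshC c + ·) '' satColors (KMP r n) c u).ncard)
          + satDegree (KMP r n) c w := by rw [himg]; ring
    _ = (A ∪ (freshC c + ·) '' satColors (KMP r n) c u).ncard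
          + satDegree (KMP r n) c w := by
        rw [Set.ncard_union_eq hdisj hAfin (Set.Finite.image _ sat_fin)]
    _ ≤ (cloneC c u w '' (KMP r n).edgeSet).ncard + satDegree (KMP r n) c w := by
        exact Nat.add_le_add_right
          (Set.ncard_le_ncard h2 (Set.Finite.image _ (Set.toFinite _))) _

/-! ### clone: no new rainbow clique -/

lemma clone_rainbowFree {u w : V r n} {m : ℕ} (hp : u.1 = w.1) (huw : u ≠ w)
    (hc : ¬ HasRainbowClique (KMP r n) c m) :
    ¬ HasRainbowClique (KMP r n) (cloneC c u w) m := by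
  rintro ⟨S, hcard, hadj, hrb⟩
  by_cases hwS : w ∈ S
  · -- replace w by u
    have hu : u ∉ S := by
      intro hu
      exact (kadj.1 (hadj u hu w hwS huw)) hp
    have hne : ∀ a ∈ S.erase w, a ≠ w := fun a ha => Finset.ne_of_mem_erase ha
    have hSmem : ∀ a ∈ S.erase w, a ∈ S := fun a ha => Finset.mem_of_mem_erase ha
    have hnu : ∀ a ∈ S.erase w, a ≠ u := fun a ha h => hu (h ▸ hSmem a ha)
    have hce : ∀ a ∈ S.erase w, ∀ b ∈ S.erase w,
        cloneC c u w s(a, b) = c s(a, b) := by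
      intro a ha b hb
      apply clone_not_mem
      rw [Sym2.mem_iff]
      rintro (h | h)
      · exact hne a ha h.symm
      · exact hne b hb h.symm
    -- the two auxiliary facts
    have aux_uu : ∀ y ∈ S.erase w, ∀ y' ∈ S.erase w,
        c s(u, y) = c s(u, y') → y = y' := by
      intro y hy y' hy' hcc
      have h1 : cloneC c u w s(w, y) = cloneC c u w s(w, y') := by
        rw [clone_pair, clone_pair, hcc]
      have := hrb w hwS y (hSmem y hy) w hwS y' (hSmem y' hy')
        (fun h => hne y hy h.symm) (fun h => hne y' hy' h.symm) h1
      exact Sym2.congr_right.mp this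
    have aux_u0 : ∀ y ∈ S.erase w, ∀ z ∈ S.erase w, ∀ w' ∈ S.erase w, z ≠ w' →
        c s(u, y) = c s(z, w') → False := by
      intro y hy z hz w' hw' hzw' hcc
      have hedge : s(z, w') ∈ (KMP r n).edgeSet :=
        (KMP r n).mem_edgeSet.2 (hadj z (hSmem z hz) w' (hSmem w' hw') hzw')
      by_cases hs : c s(u, y) ∈ satColors (KMP r n) c u
      · have : u ∈ s(z, w') := hs.2 _ hedge hcc.symm
        rw [Sym2.mem_iff] at this
        rcases this with h | h
        · rw [h] at hu; exact hu (hSmem z hz)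
        · rw [h] at hu; exact hu (hSmem w' hw')
      · have h1 : cloneC c u w s(w, y) = cloneC c u w s(z, w') := by
          rw [clone_pair, psi_of_not_sat hs, hce z hz w' hw', hcc]
        have := hrb w hwS y (hSmem y hy) z (hSmem z hz) w' (hSmem w' hw')
          (fun h => hne y hy h.symm) hzw' h1
        have hwmem : w ∈ s(z, w') := this ▸ Sym2.mem_mk_left w y
        rw [Sym2.mem_iff] at hwmem
        rcases hwmem with h | h
        · exact hne z hz h.symm
        · exact hne w' hw' h.symm
    apply hc
    refine ⟨insert u (S.erase w), ?_, ?_, ?_⟩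
    · rw [Finset.card_insert_of_notMem (fun h => hu (hSmem u h)),
        Finset.card_erase_of_mem hwS, hcard]
      have : 0 < m := hcard ▸ Finset.card_pos.2 ⟨w, hwS⟩
      omega
    · intro x hx y hy hxy
      rcases Finset.mem_insert.1 hx with hxu | hx <;>
        rcases Finset.mem_insert.1 hy with hyu | hy
      · rw [hxu, hyu] at hxy; exact absurd rfl hxy
      · rw [hxu]
        have := hadj w hwS y (hSmem y hy) (fun h => hne y hy h.symm)
        rw [kadj] at this ⊢; rwa [hp]
      · rw [hyu]
        have := hadj w hwS x (hSmem x hx) (fun h => hne x hx h.symm)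
        rw [kadj] at this ⊢; rw [hp]; exact this.symm
      · exact hadj x (hSmem x hx) y (hSmem y hy) hxy
    · intro x hx y hy z hz w' hw' hxy hzw' hcc
      rcases Finset.mem_insert.1 hx with hxu | hx <;>
        rcases Finset.mem_insert.1 hy with hyu | hy <;>
        rcases Finset.mem_insert.1 hz with hzu | hz <;>
        rcases Finset.mem_insert.1 hw' with hwu | hw'
      · rw [hxu, hyu] at hxy; exact absurd rfl hxy
      · rw [hxu, hyu] at hxy; exact absurd rfl hxy
      · rw [hxu, hyu] at hxy; exact absurd rfl hxy
      · rw [hxu, hyu] at hxy; exact absurd rfl hxy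
      · rw [hzu, hwu] at hzw'; exact absurd rfl hzw'
      · rw [hxu, hzu] at hcc ⊢
        rw [aux_uu y hy w' hw' hcc]
      · rw [hxu, hwu] at hcc ⊢
        rw [Sym2.eq_swap (a := z) (b := u)] at hcc ⊢
        rw [aux_uu y hy z hz hcc]
      · rw [hxu] at hcc
        exact (aux_u0 y hy z hz w' hw' hzw' hcc).elim
      · rw [hzu, hwu] at hzw'; exact absurd rfl hzw'
      · rw [hyu, hzu] at hcc ⊢
        rw [Sym2.eq_swap (a := x) (b := u)] at hcc ⊢
        rw [aux_uu x hx w' hw' hcc]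
      · rw [hyu, hwu] at hcc ⊢
        rw [Sym2.eq_swap (a := x) (b := u)] at hcc ⊢
        rw [Sym2.eq_swap (a := z) (b := u)] at hcc ⊢
        rw [aux_uu x hx z hz hcc]
      · rw [hyu] at hcc
        rw [Sym2.eq_swap (a := x) (b := u)] at hcc
        exact (aux_u0 x hx z hz w' hw' hzw' hcc).elim
      · rw [hzu, hwu] at hzw'; exact absurd rfl hzw'
      · rw [hzu] at hcc
        exact (aux_u0 w' hw' x hx y hy hxy hcc.symm).elim
      · rw [hwu] at hcc
        rw [Sym2.eq_swap (a := z) (b := u)] at hcc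
        exact (aux_u0 z hz x hx y hy hxy hcc.symm).elim
      · exact hrb x (hSmem x hx) y (hSmem y hy) z (hSmem z hz) w' (hSmem w' hw')
          hxy hzw' (by rw [hce x hx y hy, hce z hz w' hw']; exact hcc)
  · -- w ∉ S : colors on S unchanged
    apply hc
    refine ⟨S, hcard, hadj, ?_⟩
    intro x hx y hy z hz w' hw' hxy hzw' hcc
    have hcl : ∀ a ∈ S, ∀ b ∈ S, cloneC c u w s(a, b) = c s(a, b) := by
      intro a ha b hb
      apply clone_not_mem
      rw [Sym2.mem_iff]
      rintro (rfl | rfl) <;> [exact hwS ha; exact hwS hb]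
    exact hrb x hx y hy z hz w' hw' hxy hzw'
      (by rw [hcl x hx y hy, hcl z hz w' hw']; exact hcc)
/-! ### the anti-Ramsey number is attained -/

lemma ncolors_le_ar {m : ℕ} (hm : 3 ≤ m) (hc : ¬ HasRainbowClique (KMP r n) c m) :
    ncolors (KMP r n) c ≤ antiRamsey (KMP r n) m := by
  apply le_csSup
  · refine ⟨(Set.univ : Set (Sym2 (V r n))).ncard, ?_⟩
    rintro b ⟨c', -, rfl⟩
    exact le_trans (Set.ncard_image_le (Set.toFinite _))
      (Set.ncard_le_ncard (Set.subset_univ _) Set.finite_univ)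
  · exact ⟨c, hc, rfl⟩

lemma zero_rainbowFree {m : ℕ} (hm : 3 ≤ m) :
    ¬ HasRainbowClique (KMP r n) (fun _ => (0 : ℕ)) m := by
  rintro ⟨S, hcard, hadj, hrb⟩
  have h2 : 2 < S.card := by omega
  obtain ⟨a, b, d, ha, hb, hd, hab, had, hbd⟩ := Finset.two_lt_card_iff.1 h2
  have := hrb a ha b hb a ha d hd hab had rfl
  exact hbd (Sym2.congr_right.mp this)

lemma exists_extremal {m : ℕ} (hm : 3 ≤ m) :
    ∃ c : Sym2 (V r n) → ℕ, ¬ HasRainbowClique (KMP r n) c m ∧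
      ncolors (KMP r n) c = antiRamsey (KMP r n) m := by
  have hmem : antiRamsey (KMP r n) m ∈
      {k | ∃ c : Sym2 (V r n) → ℕ, ¬ HasRainbowClique (KMP r n) c m ∧
        ncolors (KMP r n) c = k} := by
    apply Nat.sSup_mem
    · exact ⟨ncolors (KMP r n) (fun _ => (0:ℕ)), fun _ => 0, zero_rainbowFree hm, rfl⟩
    · refine ⟨(Set.univ : Set (Sym2 (V r n))).ncard, ?_⟩
      rintro b ⟨c', -, rfl⟩
      exact le_trans (Set.ncard_image_le (Set.toFinite _))
        (Set.ncard_le_ncard (Set.subset_univ _) Set.finite_univ)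
  exact hmem

/-! ### extremal colorings -/

lemma satdeg_le {m : ℕ} (hm : 3 ≤ m)
    (hrf : ¬ HasRainbowClique (KMP r n) c m)
    (hex : ncolors (KMP r n) c = antiRamsey (KMP r n) m)
    {u w : V r n} (hp : u.1 = w.1) (huw : u ≠ w) :
    satDegree (KMP r n) c u ≤ satDegree (KMP r n) c w := by
  have h1 := clone_count (c := c) (u := u) (w := w) hp
  have h2 : ncolors (KMP r n) (cloneC c u w) ≤ antiRamsey (KMP r n) m :=
    ncolors_le_ar hm (clone_rainbowFree hp huw hrf)
  rw [hex] at h1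
  omega

lemma satdeg_eq {m : ℕ} (hm : 3 ≤ m)
    (hrf : ¬ HasRainbowClique (KMP r n) c m)
    (hex : ncolors (KMP r n) c = antiRamsey (KMP r n) m)
    {u w : V r n} (hp : u.1 = w.1) (huw : u ≠ w) :
    satDegree (KMP r n) c u = satDegree (KMP r n) c w :=
  le_antisymm (satdeg_le hm hrf hex hp huw) (satdeg_le hm hrf hex hp.symm huw.symm)

lemma clone_extremal {m : ℕ} (hm : 3 ≤ m)
    (hrf : ¬ HasRainbowClique (KMP r n) c m)
    (hex : ncolors (KMP r n) c = antiRamsey (KMP r n) m)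
    {u w : V r n} (hp : u.1 = w.1) (huw : u ≠ w) :
    ncolors (KMP r n) (cloneC c u w) = antiRamsey (KMP r n) m := by
  have h1 := clone_count (c := c) (u := u) (w := w) hp
  have h2 : ncolors (KMP r n) (cloneC c u w) ≤ antiRamsey (KMP r n) m :=
    ncolors_le_ar hm (clone_rainbowFree hp huw hrf)
  have h3 := satdeg_eq hm hrf hex hp huw
  rw [hex] at h1
  omega
/-! ### clone: saturation and symmetry within the cloned part -/

lemma not_mem_edge_of_part {u w z : V r n} (hp : u.1 = w.1) (huw : u ≠ w)
    (hz : z ∈ (KMP r n).neighborSet u) : w ∉ s(u, z) := by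
  rw [Sym2.mem_iff]
  rintro (h | h)
  · exact huw h.symm
  · exact nbr_part hz (h ▸ hp).symm

lemma nbr_trans {u w z : V r n} (hp : u.1 = w.1)
    (hz : z ∈ (KMP r n).neighborSet u) : z ∈ (KMP r n).neighborSet w :=
  mem_nbr.2 (hp ▸ mem_nbr.1 hz)

lemma sat_clone_rep {u w : V r n} (hp : u.1 = w.1) (huw : u ≠ w) :
    satColors (KMP r n) (cloneC c u w) u = satColors (KMP r n) c u := by
  ext a
  constructor
  · intro ha
    obtain ⟨e₀, he₀, hca⟩ := ha.1
    obtain ⟨z₀, hz₀, rfl⟩ := edge_split' (ha.2 e₀ he₀ hca) he₀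
    have hw₀ : w ∉ s(u, z₀) := not_mem_edge_of_part hp huw hz₀
    rw [clone_not_mem hw₀] at hca
    by_contra hns
    have hcl : cloneC c u w s(w, z₀) = a := by
      rw [clone_pair, hca, psi_of_not_sat hns]
    have := ha.2 s(w, z₀) (edge_of_nbr (nbr_trans hp hz₀)) hcl
    rw [Sym2.mem_iff] at this
    rcases this with h | h
    · exact huw h
    · exact (nbr_ne hz₀) h.symm
  · intro ha
    obtain ⟨e₀, he₀, hce₀⟩ := ha.1
    obtain ⟨z₀, hz₀, rfl⟩ := edge_split' (ha.2 e₀ he₀ hce₀) he₀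
    have hw₀ : w ∉ s(u, z₀) := not_mem_edge_of_part hp huw hz₀
    refine ⟨⟨s(u, z₀), he₀, by rw [clone_not_mem hw₀]; exact hce₀⟩, ?_⟩
    intro e he hce
    by_cases hw : w ∈ e
    · exfalso
      obtain ⟨z, hz, rfl⟩ := edge_split' hw he
      rw [clone_pair] at hce
      by_cases hsb : c s(u, z) ∈ satColors (KMP r n) c u
      · rw [psi_of_sat hsb] at hce
        have h1 := sat_lt_fresh ha
        omega
      · rw [psi_of_not_sat hsb] at hce
        exact hsb (by rw [hce]; exact ha)
    · rw [clone_not_mem hw] at hce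
      exact ha.2 e he hce

lemma sat_clone_new {u w : V r n} (hp : u.1 = w.1) (huw : u ≠ w) :
    satColors (KMP r n) (cloneC c u w) w =
      (freshC c + ·) '' satColors (KMP r n) c u := by
  ext a
  constructor
  · intro ha
    obtain ⟨e₀, he₀, hca⟩ := ha.1
    obtain ⟨z₀, hz₀, rfl⟩ := edge_split' (ha.2 e₀ he₀ hca) he₀
    rw [clone_pair] at hca
    by_cases hsb : c s(u, z₀) ∈ satColors (KMP r n) c u
    · rw [psi_of_sat hsb] at hca
      exact ⟨c s(u, z₀), hsb, hca⟩
    · exfalso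
      rw [psi_of_not_sat hsb] at hca
      have hz₀u : z₀ ∈ (KMP r n).neighborSet u := nbr_trans hp.symm hz₀
      have hw₀ : w ∉ s(u, z₀) := not_mem_edge_of_part hp huw hz₀u
      have : w ∈ s(u, z₀) := ha.2 s(u, z₀) (edge_of_nbr hz₀u)
        (by rw [clone_not_mem hw₀]; exact hca)
      exact hw₀ this
  · rintro ⟨b, hb, rfl⟩
    obtain ⟨e₀, he₀, hce₀⟩ := hb.1
    obtain ⟨z₀, hz₀, rfl⟩ := edge_split' (hb.2 e₀ he₀ hce₀) he₀
    refine ⟨⟨s(w, z₀), edge_of_nbr (nbr_trans hp hz₀), ?_⟩, ?_⟩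
    · rw [clone_pair, hce₀, psi_of_sat hb]
    · intro e he hce
      by_contra hwe
      rw [clone_not_mem hwe] at hce
      have h1 := lt_fresh (c := c) he
      simp only at hce
      omega

lemma sym_clone_new {u w : V r n} (hp : u.1 = w.1) (huw : u ≠ w) :
    SymmetricVerts (KMP r n) (cloneC c u w) u w := by
  refine ⟨nbr_eq hp, (freshC c + ·), ?_, ?_⟩
  · rw [sat_clone_rep hp huw, sat_clone_new hp huw]
    exact Set.InjOn.bijOn_image (fun b1 _ b2 _ h => by simpa using h)
  · intro z hz
    have hzw : z ∈ (KMP r n).neighborSet w := nbr_trans hp hz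
    have hw₀ : w ∉ s(u, z) := not_mem_edge_of_part hp huw hz
    rw [sat_clone_rep hp huw, clone_not_mem hw₀]
    constructor
    · intro hns
      rw [clone_pair, psi_of_not_sat hns]
    · intro hs
      rw [clone_pair, psi_of_sat hs]

lemma sat_clone_other {u v w : V r n} (hp : u.1 = w.1) (huw : u ≠ w)
    (hpv : u.1 = v.1) (hvw : v ≠ w) (hvu : v ≠ u)
    (hSym : SymmetricVerts (KMP r n) c u v) :
    satColors (KMP r n) (cloneC c u w) v = satColors (KMP r n) c v := by
  obtain ⟨hN, σ, hbij, hcond⟩ := hSym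
  ext a
  constructor
  · intro ha
    obtain ⟨e₀, he₀, hca⟩ := ha.1
    obtain ⟨z₀, hz₀, rfl⟩ := edge_split' (ha.2 e₀ he₀ hca) he₀
    have hw₀ : w ∉ s(v, z₀) := not_mem_edge_of_part (hpv.symm.trans hp) hvw hz₀
    rw [clone_not_mem hw₀] at hca
    have hz₀u : z₀ ∈ (KMP r n).neighborSet u := hN ▸ (nbr_eq hpv ▸ hz₀)
    by_contra hns
    by_cases hsb : c s(u, z₀) ∈ satColors (KMP r n) c u
    · have := (hcond z₀ hz₀u).2 hsb
      rw [hca] at this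
      exact hns (this ▸ hbij.mapsTo hsb)
    · have hvz := (hcond z₀ hz₀u).1 hsb
      rw [hca] at hvz
      have hcl : cloneC c u w s(w, z₀) = a := by
        rw [clone_pair, ← hvz, psi_of_not_sat (hvz ▸ hsb)]
      have := ha.2 s(w, z₀) (edge_of_nbr (nbr_trans hp hz₀u)) hcl
      rw [Sym2.mem_iff] at this
      rcases this with h | h
      · exact hvw h
      · exact (nbr_ne hz₀) h.symm
  · intro ha
    obtain ⟨e₀, he₀, hce₀⟩ := ha.1
    obtain ⟨z₀, hz₀, rfl⟩ := edge_split' (ha.2 e₀ he₀ hce₀) he₀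
    have hw₀ : w ∉ s(v, z₀) := not_mem_edge_of_part (hpv.symm.trans hp) hvw hz₀
    refine ⟨⟨s(v, z₀), he₀, by rw [clone_not_mem hw₀]; exact hce₀⟩, ?_⟩
    intro e he hce
    by_cases hw : w ∈ e
    · exfalso
      obtain ⟨z, hz, rfl⟩ := edge_split' hw he
      rw [clone_pair] at hce
      by_cases hsb : c s(u, z) ∈ satColors (KMP r n) c u
      · rw [psi_of_sat hsb] at hce
        have h1 := sat_lt_fresh ha
        omega
      · rw [psi_of_not_sat hsb] at hce
        have := ha.2 s(u, z) (edge_of_nbr (nbr_trans hp.symm hz)) hce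
        rw [Sym2.mem_iff] at this
        rcases this with h | h
        · exact hvu h
        · exact nbr_part (nbr_trans hp.symm hz) (h ▸ hpv.symm)
    · rw [clone_not_mem hw] at hce
      exact ha.2 e he hce

lemma sym_preserved_same {u v w : V r n} (hp : u.1 = w.1) (huw : u ≠ w)
    (hpv : u.1 = v.1) (hvw : v ≠ w) (hvu : v ≠ u)
    (hSym : SymmetricVerts (KMP r n) c u v) :
    SymmetricVerts (KMP r n) (cloneC c u w) u v := by
  obtain ⟨hN, σ, hbij, hcond⟩ := hSym
  refine ⟨nbr_eq hpv, σ, ?_, ?_⟩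
  · rw [sat_clone_rep hp huw, sat_clone_other hp huw hpv hvw hvu ⟨hN, σ, hbij, hcond⟩]
    exact hbij
  · intro z hz
    have hw₀ : w ∉ s(u, z) := not_mem_edge_of_part hp huw hz
    have hwv : w ∉ s(v, z) := not_mem_edge_of_part (hpv.symm.trans hp) hvw
      (nbr_eq hpv ▸ hz)
    rw [sat_clone_rep hp huw, clone_not_mem hw₀, clone_not_mem hwv]
    exact hcond z hz
/-! ### single-edge color classes -/

def singleCl (c : Sym2 (V r n) → ℕ) (x z : V r n) : Prop :=
  ∀ e ∈ (KMP r n).edgeSet, c e = c s(x, z) → e = s(x, z)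

lemma singleCl_swap {x z : V r n} (h : singleCl c x z) : singleCl c z x := by
  intro e he hce
  have h1 : c e = c s(x, z) := by rwa [Sym2.eq_swap (a := z) (b := x)] at hce
  rw [h e he h1, Sym2.eq_swap]

lemma sat_of_single {x z : V r n} (hz : z ∈ (KMP r n).neighborSet x)
    (hs : singleCl c x z) : c s(x, z) ∈ satColors (KMP r n) c x :=
  ⟨⟨s(x, z), edge_of_nbr hz, rfl⟩,
    fun e he hce => (hs e he hce) ▸ Sym2.mem_mk_left x z⟩

lemma single_of_two_sat {x z : V r n} {b : ℕ} (hxz : x ≠ z)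
    (hx : b ∈ satColors (KMP r n) c x) (hz : b ∈ satColors (KMP r n) c z) :
    b = c s(x, z) ∧ singleCl c x z := by
  obtain ⟨e₀, he₀, hce₀⟩ := hx.1
  have he : e₀ = s(x, z) :=
    (Sym2.mem_and_mem_iff hxz).1 ⟨hx.2 e₀ he₀ hce₀, hz.2 e₀ he₀ hce₀⟩
  subst he
  exact ⟨hce₀.symm, fun e he hce =>
    (Sym2.mem_and_mem_iff hxz).1
      ⟨hx.2 e he (hce.trans hce₀), hz.2 e he (hce.trans hce₀)⟩⟩

lemma single_parallel {u v : V r n} (huv : u ≠ v)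
    (hSym : SymmetricVerts (KMP r n) c u v) {z : V r n}
    (hzu : z ∈ (KMP r n).neighborSet u) (hs : singleCl c u z) : singleCl c v z := by
  obtain ⟨hN, σ, hbij, hcond⟩ := hSym
  have hzv : z ∈ (KMP r n).neighborSet v := hN ▸ hzu
  have hsat : c s(u, z) ∈ satColors (KMP r n) c u := sat_of_single hzu hs
  have hvz : c s(v, z) = σ (c s(u, z)) := (hcond z hzu).2 hsat
  have hvsat : c s(v, z) ∈ satColors (KMP r n) c v := hvz ▸ hbij.mapsTo hsat
  intro e he hce
  obtain ⟨z2, hz2, rfl⟩ := edge_split' (hvsat.2 e he hce) he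
  have hz2u : z2 ∈ (KMP r n).neighborSet u := hN ▸ hz2
  by_cases hsb : c s(u, z2) ∈ satColors (KMP r n) c u
  · have h1 : σ (c s(u, z2)) = σ (c s(u, z)) := by
      rw [← (hcond z2 hz2u).2 hsb, hce, hvz]
    have h2 : c s(u, z2) = c s(u, z) := hbij.injOn hsb hsat h1
    have := hs s(u, z2) (edge_of_nbr hz2u) h2
    rw [Sym2.congr_right.mp this]
  · exfalso
    have h1 := (hcond z2 hz2u).1 hsb
    have : c s(u, z2) ∈ satColors (KMP r n) c v := by rw [← h1, hce]; exact hvsat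
    exact not_sat_of_pair hz2u (fun h => huv h.symm) (fun h => nbr_ne hz2 h.symm) this

/-! ### clone across parts: saturated colors of untouched vertices -/

lemma sat_clone_cross {u v u' w : V r n} (hpuv : u.1 = v.1) (huv : u ≠ v)
    (hSym : SymmetricVerts (KMP r n) c u v)
    (hpj : u'.1 = w.1) (hu'w : u' ≠ w) (hcross : u.1 ≠ w.1) :
    satColors (KMP r n) (cloneC c u' w) u =
      (satColors (KMP r n) c u \ {a | a = c s(u, w) ∧ singleCl c u w}) ∪
        {a | a = freshC c + c s(u, u') ∧ singleCl c u u'} := by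
  obtain ⟨hN, σ, hbij, hcond⟩ := hSym
  have hwu : w ∈ (KMP r n).neighborSet u := mem_nbr.2 hcross
  have hu'u : u' ∈ (KMP r n).neighborSet u := mem_nbr.2 (fun h => hcross (h.trans hpj))
  have huw : u ≠ w := (nbr_ne hwu).symm
  have huu' : u ≠ u' := (nbr_ne hu'u).symm
  have hvw : v ≠ w := fun h => hcross (hpuv.trans (by rw [h]))
  have huNw : u ∈ (KMP r n).neighborSet w := mem_nbr.2 (fun h => hcross h.symm)
  have hb₀ : c s(u', u) = c s(u, u') := by rw [Sym2.eq_swap]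
  have hval : cloneC c u' w s(u, w) = psiC c u' (c s(u, u')) := by
    rw [Sym2.eq_swap, clone_pair, hb₀]
  ext a
  constructor
  · intro ha
    by_cases hA : ∃ z₀ ∈ (KMP r n).neighborSet u, z₀ ≠ w ∧ cloneC c u' w s(u, z₀) = a
    · -- an old color that survives
      obtain ⟨z₀, hz₀, hz₀w, hca⟩ := hA
      have hwe : w ∉ s(u, z₀) := by
        rw [Sym2.mem_iff]; rintro (h | h); exacts [huw h.symm, hz₀w h.symm]
      rw [clone_not_mem hwe] at hca
      have hsatu : a ∈ satColors (KMP r n) c u := by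
        by_contra hns
        have h1 := (hcond z₀ hz₀).1 (by rw [hca]; exact hns)
        have hwe2 : w ∉ s(v, z₀) := by
          rw [Sym2.mem_iff]; rintro (h | h); exacts [hvw h.symm, hz₀w h.symm]
        have h2 : cloneC c u' w s(v, z₀) = a := by rw [clone_not_mem hwe2, h1, hca]
        have h3 := ha.2 s(v, z₀)
          (edge_of_nbr (by rw [← nbr_eq hpuv]; exact hz₀)) h2
        rw [Sym2.mem_iff] at h3
        rcases h3 with h | h
        · exact huv h
        · exact nbr_ne hz₀ h.symm
      refine Or.inl ⟨hsatu, ?_⟩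
      rintro ⟨haw, hsing⟩
      have := hsing s(u, z₀) (edge_of_nbr hz₀) (by rw [hca, haw])
      exact hz₀w (Sym2.congr_right.mp this)
    · -- the only `u`-edge of color `a` is `s(u,w)`
      push_neg at hA
      obtain ⟨e₀, he₀, hca⟩ := ha.1
      obtain ⟨z₀, hz₀, rfl⟩ := edge_split' (ha.2 e₀ he₀ hca) he₀
      have hz₀w : z₀ = w := by
        by_contra h
        exact (hA z₀ hz₀ h) hca
      rw [hz₀w] at hca
      by_cases hsb : c s(u, u') ∈ satColors (KMP r n) c u'
      · right
        rw [hval, psi_of_sat hsb] at hca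
        refine ⟨hca.symm, ?_⟩
        intro e he hce
        obtain ⟨z2, hz2, rfl⟩ := edge_split' (hsb.2 e he hce) he
        have hz2w : z2 ∈ (KMP r n).neighborSet w := by
          rw [← nbr_eq hpj]; exact hz2
        have h2 : cloneC c u' w s(w, z2) = a := by
          rw [clone_pair, hce, psi_of_sat hsb, hca]
        have h3 := ha.2 s(w, z2) (edge_of_nbr hz2w) h2
        rw [Sym2.mem_iff] at h3
        rcases h3 with h | h
        · exact absurd h huw
        · rw [← h, Sym2.eq_swap]
      · exfalso
        rw [hval, psi_of_not_sat hsb] at hca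
        have hwe : w ∉ s(u, u') := by
          rw [Sym2.mem_iff]; rintro (h | h); exacts [huw h.symm, hu'w h.symm]
        exact (hA u' hu'u hu'w) (by rw [clone_not_mem hwe]; exact hca)
  · intro ha
    rcases ha with ⟨hsatu, hnd⟩ | ⟨haeq, hsing⟩
    · -- surviving old colors
      have hz : ∃ z2 ∈ (KMP r n).neighborSet u, z2 ≠ w ∧ c s(u, z2) = a := by
        by_cases h1 : a = c s(u, w)
        · have h2 : ¬ singleCl c u w := fun hs => hnd ⟨h1, hs⟩
          rw [singleCl] at h2
          push_neg at h2
          obtain ⟨e, he, hce, hne⟩ := h2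
          obtain ⟨z2, hz2, rfl⟩ := edge_split'
            (hsatu.2 e he (by rw [hce, ← h1])) he
          refine ⟨z2, hz2, ?_, by rw [hce, ← h1]⟩
          intro h
          exact hne (by rw [h])
        · obtain ⟨e₀, he₀, hce₀⟩ := hsatu.1
          obtain ⟨z₀, hz₀, rfl⟩ := edge_split' (hsatu.2 e₀ he₀ hce₀) he₀
          refine ⟨z₀, hz₀, ?_, hce₀⟩
          intro h
          exact h1 (by rw [← hce₀, h])
      obtain ⟨z2, hz2, hz2w, hcz⟩ := hz
      have hwe : w ∉ s(u, z2) := by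
        rw [Sym2.mem_iff]; rintro (h | h); exacts [huw h.symm, hz2w h.symm]
      refine ⟨⟨s(u, z2), edge_of_nbr hz2, by rw [clone_not_mem hwe]; exact hcz⟩, ?_⟩
      intro e he hce
      by_cases hw : w ∈ e
      · obtain ⟨z, hz, rfl⟩ := edge_split' hw he
        rw [clone_pair] at hce
        by_cases hsb : c s(u', z) ∈ satColors (KMP r n) c u'
        · rw [psi_of_sat hsb] at hce
          have := sat_lt_fresh hsatu
          omega
        · rw [psi_of_not_sat hsb] at hce
          have hzu' : z ∈ (KMP r n).neighborSet u' := nbr_trans hpj.symm hz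
          have h3 := hsatu.2 s(u', z) (edge_of_nbr hzu') hce
          rw [Sym2.mem_iff] at h3
          rcases h3 with h | h
          · exact absurd h huu'
          · rw [Sym2.mem_iff]; right; exact h
      · rw [clone_not_mem hw] at hce
        exact hsatu.2 e he hce
    · -- the new color
      have huNu' : u ∈ (KMP r n).neighborSet u' := mem_nbr.2 (nbr_part hu'u)
      have hsbu' : c s(u, u') ∈ satColors (KMP r n) c u' := by
        rw [← hb₀]
        exact sat_of_single huNu' (singleCl_swap hsing)
      refine ⟨⟨s(u, w), edge_of_nbr hwu, by
        rw [hval, psi_of_sat hsbu', haeq]⟩, ?_⟩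
      intro e he hce
      by_cases hw : w ∈ e
      · obtain ⟨z, hz, rfl⟩ := edge_split' hw he
        rw [clone_pair] at hce
        by_cases hsb : c s(u', z) ∈ satColors (KMP r n) c u'
        · rw [psi_of_sat hsb, haeq] at hce
          have hzz : c s(u', z) = c s(u, u') := by omega
          have h4 := hsing s(u', z) (edge_of_nbr (nbr_trans hpj.symm hz)) hzz
          rw [Sym2.eq_iff] at h4
          rcases h4 with ⟨h5, h6⟩ | ⟨h5, h6⟩
          · exact absurd h5.symm huu'
          · rw [Sym2.mem_iff]; right; exact h6.symm
        · rw [psi_of_not_sat hsb, haeq] at hce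
          have := lt_fresh (c := c) (edge_of_nbr (nbr_trans hpj.symm hz))
          omega
      · rw [clone_not_mem hw, haeq] at hce
        have := lt_fresh (c := c) he
        omega
/-! ### the key preservation lemma: cloning across parts preserves symmetry -/

lemma sym_preserved_cross {u v u' w : V r n} (hpuv : u.1 = v.1) (huv : u ≠ v)
    (hSym : SymmetricVerts (KMP r n) c u v)
    (hpj : u'.1 = w.1) (hu'w : u' ≠ w) (hcross : u.1 ≠ w.1) :
    SymmetricVerts (KMP r n) (cloneC c u' w) u v := by
  have hSym2 := hSym
  obtain ⟨hN, σ, hbij, hcond⟩ := hSym2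
  have hsymm : SymmetricVerts (KMP r n) c v u := sym_symm hpuv huv hSym
  have hcrossv : v.1 ≠ w.1 := fun h => hcross (hpuv.trans h)
  -- basic incidences
  have hwu : w ∈ (KMP r n).neighborSet u := mem_nbr.2 hcross
  have hwv : w ∈ (KMP r n).neighborSet v := mem_nbr.2 hcrossv
  have hu'u : u' ∈ (KMP r n).neighborSet u := mem_nbr.2 (fun h => hcross (h.trans hpj))
  have hu'v : u' ∈ (KMP r n).neighborSet v := mem_nbr.2 (fun h => hcrossv (h.trans hpj))
  have huw : u ≠ w := (nbr_ne hwu).symm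
  have hvw : v ≠ w := (nbr_ne hwv).symm
  have huu' : u ≠ u' := (nbr_ne hu'u).symm
  have hvu' : v ≠ u' := (nbr_ne hu'v).symm
  have huNu' : u ∈ (KMP r n).neighborSet u' := mem_nbr.2 (nbr_part hu'u)
  have hvNu' : v ∈ (KMP r n).neighborSet u' := mem_nbr.2 (nbr_part hu'v)
  have hb₀u : c s(u', u) = c s(u, u') := by rw [Sym2.eq_swap]
  have hb₀v : c s(u', v) = c s(v, u') := by rw [Sym2.eq_swap]
  have hvalu : cloneC c u' w s(u, w) = psiC c u' (c s(u, u')) := by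
    rw [Sym2.eq_swap, clone_pair, hb₀u]
  have hvalv : cloneC c u' w s(v, w) = psiC c u' (c s(v, u')) := by
    rw [Sym2.eq_swap, clone_pair, hb₀v]
  have hfre : 0 < freshC c := Nat.succ_pos _
  -- parallel singles
  have P1 : singleCl c u w ↔ singleCl c v w :=
    ⟨fun h => single_parallel huv hSym hwu h,
     fun h => single_parallel huv.symm hsymm hwv h⟩
  have P2 : singleCl c u u' ↔ singleCl c v u' :=
    ⟨fun h => single_parallel huv hSym hu'u h,
     fun h => single_parallel huv.symm hsymm hu'v h⟩
  -- characterizations of the two new saturated sets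
  have Su' := sat_clone_cross hpuv huv hSym hpj hu'w hcross
  have Sv' := sat_clone_cross hpuv.symm huv.symm hsymm hpj hu'w hcrossv
  -- if both ends see the color as saturated it is a single edge
  have hsat2single : c s(u, u') ∈ satColors (KMP r n) c u →
      c s(u, u') ∈ satColors (KMP r n) c u' → singleCl c u u' := by
    intro h1 h2
    exact (single_of_two_sat huu' h1 h2).2
  -- the patched bijection
  set σ' : ℕ → ℕ :=
    fun a => if a = freshC c + c s(u, u') then freshC c + c s(v, u') else σ a with hσ'
  have hs1 : ∀ {a : ℕ}, a = freshC c + c s(u, u') →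
      σ' a = freshC c + c s(v, u') := fun h => by rw [hσ']; simp only [if_pos h]
  have hs2 : ∀ {a : ℕ}, a ≠ freshC c + c s(u, u') → σ' a = σ a :=
    fun h => by rw [hσ']; simp only [if_neg h]
  refine ⟨nbr_eq hpuv, σ', ?_, ?_⟩
  · -- BijOn
    rw [Su', Sv']
    constructor
    · -- MapsTo
      intro a ha
      by_cases hfa : a = freshC c + c s(u, u')
      · have hnu : singleCl c u u' := by
          rcases ha with ⟨hsa, -⟩ | ⟨-, hs⟩
          · exact absurd (sat_lt_fresh hsa) (by omega)
          · exact hs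
        right
        exact ⟨hs1 hfa, P2.1 hnu⟩
      · have ha' : a ∈ satColors (KMP r n) c u \
            {a | a = c s(u, w) ∧ singleCl c u w} := by
          rcases ha with h | ⟨he, -⟩
          · exact h
          · exact absurd he hfa
        rw [hs2 hfa]
        left
        refine ⟨hbij.mapsTo ha'.1, ?_⟩
        rintro ⟨hav, hsv⟩
        have hsw : singleCl c u w := P1.2 hsv
        have hsatw : c s(u, w) ∈ satColors (KMP r n) c u := sat_of_single hwu hsw
        have h3 : c s(v, w) = σ (c s(u, w)) := (hcond w hwu).2 hsatw
        have hane : a ≠ c s(u, w) := fun h => ha'.2 ⟨h, hsw⟩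
        exact hane (hbij.injOn ha'.1 hsatw (by rw [← h3, ← hav]))
    constructor
    · -- InjOn
      intro a1 h1 a2 h2 heq
      by_cases f1 : a1 = freshC c + c s(u, u') <;>
        by_cases f2 : a2 = freshC c + c s(u, u')
      · rw [f1, f2]
      · exfalso
        have hm2 : a2 ∈ satColors (KMP r n) c u := by
          rcases h2 with h | ⟨he, -⟩
          · exact h.1
          · exact absurd he f2
        rw [hs1 f1, hs2 f2] at heq
        have := sat_lt_fresh (hbij.mapsTo hm2)
        omega
      · exfalso
        have hm1 : a1 ∈ satColors (KMP r n) c u := by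
          rcases h1 with h | ⟨he, -⟩
          · exact h.1
          · exact absurd he f1
        rw [hs2 f1, hs1 f2] at heq
        have := sat_lt_fresh (hbij.mapsTo hm1)
        omega
      · have hm1 : a1 ∈ satColors (KMP r n) c u := by
          rcases h1 with h | ⟨he, -⟩
          · exact h.1
          · exact absurd he f1
        have hm2 : a2 ∈ satColors (KMP r n) c u := by
          rcases h2 with h | ⟨he, -⟩
          · exact h.1
          · exact absurd he f2
        rw [hs2 f1, hs2 f2] at heq
        exact hbij.injOn hm1 hm2 heq
    · -- SurjOn
      intro b hb
      rcases hb with ⟨hbv, hbnd⟩ | ⟨hbe, hbs⟩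
      · obtain ⟨a, ha, rfl⟩ := hbij.surjOn hbv
        have hnd : a ∉ {a | a = c s(u, w) ∧ singleCl c u w} := by
          rintro ⟨hae, hsw⟩
          have hsatw : c s(u, w) ∈ satColors (KMP r n) c u := sat_of_single hwu hsw
          have h3 : c s(v, w) = σ (c s(u, w)) := (hcond w hwu).2 hsatw
          exact hbnd ⟨by rw [hae, ← h3], P1.1 hsw⟩
        refine ⟨a, Or.inl ⟨ha, hnd⟩, ?_⟩
        have := sat_lt_fresh ha
        rw [hs2 (by omega : a ≠ freshC c + c s(u, u'))]
      · refine ⟨freshC c + c s(u, u'), Or.inr ⟨rfl, P2.2 hbs⟩, ?_⟩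
        rw [hs1 rfl, hbe]
  · -- the color conditions
    intro z hz
    by_cases hzw : z = w
    · rw [hzw]
      by_cases hsb : c s(u, u') ∈ satColors (KMP r n) c u'
      · by_cases hD2 : singleCl c u u'
        · -- new saturated star at both clones
          have hmem : cloneC c u' w s(u, w) ∈
              satColors (KMP r n) (cloneC c u' w) u := by
            rw [Su']
            right
            exact ⟨by rw [hvalu, psi_of_sat hsb], hD2⟩
          constructor
          · intro hns
            exact absurd hmem hns
          · intro _
            have hq : c s(v, u') ∈ satColors (KMP r n) c u' := by
              have := sat_of_single hvNu' (singleCl_swap (P2.1 hD2))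
              rwa [hb₀v] at this
            rw [hvalu, psi_of_sat hsb, hvalv, psi_of_sat hq, hs1 rfl]
        · -- β2 : the new color is not saturated at u; patterns agree
          have hnsu : c s(u, u') ∉ satColors (KMP r n) c u :=
            fun h => hD2 (hsat2single h hsb)
          have hnmem : cloneC c u' w s(u, w) ∉
              satColors (KMP r n) (cloneC c u' w) u := by
            rw [Su', hvalu, psi_of_sat hsb]
            rintro (⟨hsa, -⟩ | ⟨-, hs⟩)
            · exact absurd (sat_lt_fresh hsa) (by omega)
            · exact hD2 hs
          constructor
          · intro _
            have hq : c s(v, u') = c s(u, u') := (hcond u' hu'u).1 hnsu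
            rw [hvalu, hvalv, hq]
          · intro hs
            exact absurd hs hnmem
      · -- α : the rep-edge color is not saturated at u'
        by_cases hbu : c s(u, u') ∈ satColors (KMP r n) c u
        · -- α1
          have hmem : cloneC c u' w s(u, w) ∈
              satColors (KMP r n) (cloneC c u' w) u := by
            rw [Su', hvalu, psi_of_not_sat hsb]
            left
            refine ⟨hbu, ?_⟩
            rintro ⟨hae, hsw⟩
            have := hsw s(u, u') (edge_of_nbr hu'u) hae
            rw [Sym2.congr_right] at this
            exact hu'w this
          constructor
          · intro hns
            exact absurd hmem hns
          · intro _
            have hq : c s(v, u') = σ (c s(u, u')) := (hcond u' hu'u).2 hbu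
            have hnss : σ (c s(u, u')) ∉ satColors (KMP r n) c u' := by
              intro hss
              have hsv : σ (c s(u, u')) ∈ satColors (KMP r n) c v :=
                hbij.mapsTo hbu
              have := (single_of_two_sat hvu' hsv hss).2
              exact hsb (by
                have h5 := sat_of_single huNu' (singleCl_swap (P2.2 this))
                rwa [hb₀u] at h5)
            have hlt := sat_lt_fresh hbu
            rw [hvalu, psi_of_not_sat hsb, hvalv, hq, psi_of_not_sat hnss,
              hs2 (by omega : c s(u, u') ≠ freshC c + c s(u, u'))]
        · -- α2
          have hnmem : cloneC c u' w s(u, w) ∉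
              satColors (KMP r n) (cloneC c u' w) u := by
            rw [Su', hvalu, psi_of_not_sat hsb]
            rintro (⟨hsa, -⟩ | ⟨he, -⟩)
            · exact hbu hsa
            · have := lt_fresh (c := c) (edge_of_nbr hu'u)
              omega
          constructor
          · intro _
            have hq : c s(v, u') = c s(u, u') := (hcond u' hu'u).1 hbu
            rw [hvalu, hvalv, hq]
          · intro hs
            exact absurd hs hnmem
    · -- z ≠ w : nothing changed
      have hwe_u : w ∉ s(u, z) := by
        rw [Sym2.mem_iff]; rintro (h | h); exacts [huw h.symm, hzw h.symm]
      have hwe_v : w ∉ s(v, z) := by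
        rw [Sym2.mem_iff]; rintro (h | h); exacts [hvw h.symm, hzw h.symm]
      have hstat : c s(u, z) ∈ satColors (KMP r n) (cloneC c u' w) u ↔
          c s(u, z) ∈ satColors (KMP r n) c u := by
        rw [Su']
        constructor
        · rintro (⟨h, -⟩ | ⟨he, -⟩)
          · exact h
          · exact absurd (lt_fresh (c := c) (edge_of_nbr hz))
              (by rw [he]; omega)
        · intro h
          left
          refine ⟨h, ?_⟩
          rintro ⟨hae, hsw⟩
          have := hsw s(u, z) (edge_of_nbr hz) hae
          rw [Sym2.congr_right] at this
          exact hzw this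
      rw [clone_not_mem hwe_u, clone_not_mem hwe_v, hstat]
      constructor
      · intro hns
        exact (hcond z hz).1 hns
      · intro hs
        have hlt := sat_lt_fresh hs
        rw [(hcond z hz).2 hs,
          hs2 (by omega : c s(u, z) ≠ freshC c + c s(u, u'))]
/-! ### assembling the final coloring -/

def repV (x : V r n) : V r n := ⟨x.1, ⟨0, x.2.pos⟩⟩

lemma repV_eq_of_part {x y : V r n} (h : x.1 = y.1) : repV x = repV y := by
  obtain ⟨i, p⟩ := x
  obtain ⟨j, q⟩ := y
  cases h
  rfl

lemma process {m : ℕ} (hm : 3 ≤ m) :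
    ∀ (L : List (V r n)) (c : Sym2 (V r n) → ℕ),
      ¬ HasRainbowClique (KMP r n) c m →
      ncolors (KMP r n) c = antiRamsey (KMP r n) m →
      (∀ x : V r n, x ∉ L → SymmetricVerts (KMP r n) c (repV x) x) →
      ∃ c', ¬ HasRainbowClique (KMP r n) c' m ∧
        ncolors (KMP r n) c' = antiRamsey (KMP r n) m ∧
        ∀ x : V r n, SymmetricVerts (KMP r n) c' (repV x) x := by
  intro L
  induction L with
  | nil =>
    intro c h1 h2 h3
    exact ⟨c, h1, h2, fun x => h3 x List.not_mem_nil⟩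
  | cons w L IH =>
    intro c h1 h2 h3
    by_cases hw : w = repV w
    · apply IH c h1 h2
      intro x hx
      by_cases hxw : x = w
      · rw [hxw, ← hw]
        exact sym_refl c w
      · exact h3 x (fun h => (List.mem_cons.1 h).elim hxw hx)
    · have hpart : (repV w).1 = w.1 := rfl
      have hne : repV w ≠ w := fun h => hw h.symm
      have h1' := clone_rainbowFree (c := c) hpart hne h1
      have h2' := clone_extremal hm h1 h2 hpart hne
      apply IH (cloneC c (repV w) w) h1' h2'
      intro x hx
      by_cases hxw : x = w
      · rw [hxw]
        have : repV x = repV w := repV_eq_of_part (by rw [hxw])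
        rw [hxw] at this
        rw [this]
        exact sym_clone_new hpart hne
      · have hxL : x ∉ w :: L := fun h => (List.mem_cons.1 h).elim hxw hx
        have hold := h3 x hxL
        by_cases hxr : x = repV x
        · rw [← hxr]
          exact sym_refl _ x
        · by_cases hpx : x.1 = w.1
          · have hrr : repV x = repV w := repV_eq_of_part hpx
            rw [hrr] at hold ⊢
            exact sym_preserved_same hpart hne (hpx.symm : (repV w).1 = x.1)
              hxw (fun h => hxr (h.trans hrr.symm)) hold
          · exact sym_preserved_cross (rfl : (repV x).1 = x.1)
              (fun h => hxr h.symm) hold hpart hne (hpx : (repV x).1 ≠ w.1)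

lemma final_symmetry {c : Sym2 (V r n) → ℕ}
    (hc : ∀ x : V r n, SymmetricVerts (KMP r n) c (repV x) x)
    {x y : V r n} (hxy : x.1 = y.1) : SymmetricVerts (KMP r n) c x y := by
  by_cases heq : x = y
  · rw [heq]; exact sym_refl c y
  have hrep : repV x = repV y := repV_eq_of_part hxy
  by_cases hx : x = repV x
  · by_cases hy : y = repV y
    · exact absurd (hx.trans (hrep.trans hy.symm)) heq
    · rw [hx, hrep]
      exact hc y
  · have hsx : SymmetricVerts (KMP r n) c x (repV x) :=
      sym_symm (rfl : (repV x).1 = x.1) (fun h => hx h.symm) (hc x)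
    by_cases hy : y = repV y
    · rw [hy, ← hrep]
      exact hsx
    · exact sym_trans (x := x) (y := repV x) (z := y) rfl hx hsx
        (by rw [hrep]; exact hc y)

end TSWork

/-- There is a totally symmetric extremal coloring for `ar(G, K_m)` for any complete
multipartite graph `G` and complete graph `K_m` (`m ≥ 3`). -/
theorem exists_totally_symmetric_extremal (r : ℕ) (n : ℕ → ℕ) (m : ℕ) (hm : 3 ≤ m) :
    ∃ c : Sym2 (Σ i : Fin r, Fin (n i)) → ℕ,
      (∀ x y : Σ i : Fin r, Fin (n i), x.1 = y.1 → SymmetricVerts (KMP r n) c x y) ∧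
      ¬ HasRainbowClique (KMP r n) c m ∧
      ncolors (KMP r n) c = antiRamsey (KMP r n) m := by
  
  obtain ⟨c₀, h1, h2⟩ := TSWork.exists_extremal (r := r) (n := n) hm
  obtain ⟨c, hc1, hc2, hc3⟩ := TSWork.process hm
    (Finset.univ : Finset (TSWork.V r n)).toList c₀ h1 h2
    (fun x hx => absurd (Finset.mem_toList.2 (Finset.mem_univ x)) hx)
  exact ⟨c, fun x y hxy => TSWork.final_symmetry hc3 hxy, hc1, hc2⟩
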